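/- Let $A$ be a nonnegative $N\times N$ real matrix with spectral radius $\rho(A) > 0$, and let $e_1 = (1,0,\dots,0)$. Assume: (i) $A_{1,1} > 0$; (ii) there exists $n$ such that all entries of the row vector $e_1 A^n$ are strictly positive; (iii) $(e_1A^n)_i \leq (e_1A^n)_1$ for all $n \in \mathbb{N}$ and all $i \in \{1,\dots,N\}$. Then the limit $\lim_{n\to\infty} e_1 A^n / \rho(A)^n$ exists. -/

import Mathlib

/-- The spectral radius of a real square matrix: the supremum of the moduli of
its complex eigenvalues. -/
noncomputable def specRad {N : ℕ} (A : Matrix (Fin N) (Fin N) ℝ) : ℝ :=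
  sSup ((fun z : ℂ => ‖z‖) '' spectrum ℂ (A.map (Complex.ofReal : ℝ → ℂ)))



open Filter Finset Topology

namespace Stmt14Aux

lemma conv_swap (b : ℕ → ℝ) (x : ℝ) (k : ℕ) (M : ℕ) :
    ∑ n ∈ range M, (if k ≤ n then x ^ n * b (n - k) else 0)
      = x ^ k * ∑ m ∈ range (M - k), x ^ m * b m := by
  induction M with
  | zero => simp
  | succ M ih =>
    rw [Finset.sum_range_succ, ih]
    by_cases h : k ≤ M
    · rw [if_pos h, Nat.succ_sub h, Finset.sum_range_succ, mul_add, ← mul_assoc,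
        ← pow_add, Nat.add_sub_cancel' h]
    · rw [if_neg h]
      have h2 : M + 1 - k = M - k := by omega
      rw [h2, add_zero]

end Stmt14Aux

namespace Stmt14Aux

variable {f b : ℕ → ℝ}

lemma renewal_swap (b : ℕ → ℝ) (x : ℝ) (J M : ℕ) :
    ∑ n ∈ Ico 1 M, ∑ k ∈ Icc 1 J, (if k ≤ n then x ^ n * (f k * b (n - k)) else 0)
      = ∑ k ∈ Icc 1 J, f k * x ^ k * ∑ m ∈ range (M - k), x ^ m * b m := by
  have hext : ∑ n ∈ Ico 1 M, ∑ k ∈ Icc 1 J, (if k ≤ n then x ^ n * (f k * b (n - k)) else 0)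
      = ∑ n ∈ range M, ∑ k ∈ Icc 1 J, (if k ≤ n then x ^ n * (f k * b (n - k)) else 0) := by
    rw [range_eq_Ico]
    rcases Nat.eq_zero_or_pos M with hM | hM
    · simp [hM]
    rw [Finset.sum_eq_sum_Ico_succ_bot hM]
    have : ∑ k ∈ Icc 1 J, (if k ≤ 0 then x ^ 0 * (f k * b (0 - k)) else 0) = 0 := by
      apply Finset.sum_eq_zero
      intro k hk
      rw [if_neg]
      simp only [mem_Icc] at hk
      omega
    rw [this, zero_add]
  rw [hext, Finset.sum_comm]
  apply Finset.sum_congr rfl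
  intro k hk
  rw [conv_swap (fun m => f k * b m) x k M]
  have h2 : ∑ m ∈ range (M - k), x ^ m * (f k * b m)
      = f k * ∑ m ∈ range (M - k), x ^ m * b m := by
    rw [Finset.mul_sum]
    exact Finset.sum_congr rfl fun m _ => by ring
  rw [h2]
  ring

lemma filter_sum_eq (n J : ℕ) (T : ℕ → ℝ) :
    ∑ k ∈ Icc 1 J, (if k ≤ n then T k else 0) = ∑ k ∈ Icc 1 (min J n), T k := by
  rw [← Finset.sum_filter]
  congr 1
  ext k
  simp only [mem_filter, mem_Icc, le_min_iff]
  tauto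

lemma pgs_lower (hf : ∀ k, 0 ≤ f k) (hbn : ∀ n, 0 ≤ b n) (hb0 : b 0 = 1)
    (hren : ∀ n, 1 ≤ n → b n = ∑ k ∈ Icc 1 n, f k * b (n - k))
    (x : ℝ) (hx0 : 0 ≤ x) (J M : ℕ) (hJ : 1 ≤ J) (hM : J < M) :
    1 + (∑ k ∈ Icc 1 J, f k * x ^ k) * (∑ m ∈ range (M - J), x ^ m * b m)
      ≤ ∑ n ∈ range M, x ^ n * b n := by
  have h1 : ∑ n ∈ range M, x ^ n * b n = 1 + ∑ n ∈ Ico 1 M, x ^ n * b n := by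
    rw [range_eq_Ico, Finset.sum_eq_sum_Ico_succ_bot (by omega : 0 < M)]
    simp [hb0]
  rw [h1]
  have key : ∑ k ∈ Icc 1 J, f k * x ^ k * ∑ m ∈ range (M - J), x ^ m * b m
      ≤ ∑ n ∈ Ico 1 M, x ^ n * b n := by
    have step1 : ∀ n ∈ Ico 1 M,
        ∑ k ∈ Icc 1 J, (if k ≤ n then x ^ n * (f k * b (n - k)) else 0) ≤ x ^ n * b n := by
      intro n hn
      simp only [mem_Ico] at hn
      rw [hren n hn.1, Finset.mul_sum, filter_sum_eq]
      apply Finset.sum_le_sum_of_subset_of_nonneg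
      · apply Finset.Icc_subset_Icc_right
        exact min_le_right _ _
      · intro k _ _
        exact mul_nonneg (pow_nonneg hx0 n) (mul_nonneg (hf k) (hbn _))
    calc ∑ k ∈ Icc 1 J, f k * x ^ k * ∑ m ∈ range (M - J), x ^ m * b m
        ≤ ∑ k ∈ Icc 1 J, f k * x ^ k * ∑ m ∈ range (M - k), x ^ m * b m := by
          apply Finset.sum_le_sum
          intro k hk
          simp only [mem_Icc] at hk
          have : (0:ℝ) ≤ f k * x ^ k := mul_nonneg (hf k) (pow_nonneg hx0 k)
          apply mul_le_mul_of_nonneg_left _ this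
          apply Finset.sum_le_sum_of_subset_of_nonneg
          · apply Finset.range_subset_range.2; omega
          · intro m _ _; exact mul_nonneg (pow_nonneg hx0 _) (hbn _)
      _ = ∑ n ∈ Ico 1 M, ∑ k ∈ Icc 1 J, (if k ≤ n then x ^ n * (f k * b (n - k)) else 0) :=
          (renewal_swap b x J M).symm
      _ ≤ ∑ n ∈ Ico 1 M, x ^ n * b n := Finset.sum_le_sum step1
  rw [Finset.sum_mul] at *
  linarith [key]

lemma pgs_upper (hf : ∀ k, 0 ≤ f k) (hbn : ∀ n, 0 ≤ b n) (hb0 : b 0 = 1)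
    (hren : ∀ n, 1 ≤ n → b n = ∑ k ∈ Icc 1 n, f k * b (n - k))
    (x : ℝ) (hx0 : 0 ≤ x) (M : ℕ) (hM : 1 ≤ M) :
    ∑ n ∈ range M, x ^ n * b n
      ≤ 1 + ∑ k ∈ Icc 1 (M - 1), f k * x ^ k * ∑ m ∈ range (M - k), x ^ m * b m := by
  have h1 : ∑ n ∈ range M, x ^ n * b n = 1 + ∑ n ∈ Ico 1 M, x ^ n * b n := by
    rw [range_eq_Ico, Finset.sum_eq_sum_Ico_succ_bot (by omega : 0 < M)]
    simp [hb0]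
  rw [h1, ← renewal_swap b x (M-1) M]
  gcongr 1 + ?_
  apply Finset.sum_le_sum
  intro n hn
  simp only [mem_Ico] at hn
  rw [hren n hn.1, Finset.mul_sum, filter_sum_eq]
  have hmin : min (M - 1) n = n := by omega
  rw [hmin]

lemma geom_bound (x : ℝ) (hx0 : 0 ≤ x) (hx1 : x < 1) (hbn : ∀ n, 0 ≤ b n)
    (hb1 : ∀ n, b n ≤ 1) (M : ℕ) : ∑ n ∈ range M, x ^ n * b n ≤ (1 - x)⁻¹ := by
  have h1 : ∑ n ∈ range M, x ^ n * b n ≤ ∑ n ∈ range M, x ^ n := by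
    apply Finset.sum_le_sum
    intro n _
    have := mul_le_mul_of_nonneg_left (hb1 n) (pow_nonneg hx0 n)
    simpa using this
  have h2 : ∑ n ∈ range M, x ^ n ≤ (1 - x)⁻¹ := by
    have h3 : (∑ n ∈ range M, x ^ n) * (1 - x) = 1 - x ^ M := by
      have := geom_sum_mul x M
      nlinarith [this]
    have h4 : (0:ℝ) < 1 - x := by linarith
    rw [inv_eq_one_div, le_div_iff₀ h4]
    nlinarith [pow_nonneg hx0 M]
  linarith

lemma iterate_lower (hf : ∀ k, 0 ≤ f k) (hbn : ∀ n, 0 ≤ b n) (hb0 : b 0 = 1)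
    (hren : ∀ n, 1 ≤ n → b n = ∑ k ∈ Icc 1 n, f k * b (n - k))
    (x : ℝ) (hx0 : 0 ≤ x) (J : ℕ) (hJ : 1 ≤ J) :
    ∀ m M, m * J < M →
      ∑ i ∈ range (m + 1), (∑ k ∈ Icc 1 J, f k * x ^ k) ^ i ≤ ∑ n ∈ range M, x ^ n * b n := by
  have hT : 0 ≤ ∑ k ∈ Icc 1 J, f k * x ^ k :=
    Finset.sum_nonneg fun k _ => mul_nonneg (hf k) (pow_nonneg hx0 k)
  intro m
  induction m with
  | zero =>
    intro M hM
    simp only [zero_mul] at hM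
    rw [Finset.range_one, Finset.sum_singleton, pow_zero]
    calc (1:ℝ) = x ^ 0 * b 0 := by simp [hb0]
      _ ≤ ∑ n ∈ range M, x ^ n * b n := by
          apply Finset.single_le_sum (f := fun n => x ^ n * b n)
          · intro n _; exact mul_nonneg (pow_nonneg hx0 _) (hbn _)
          · simpa using hM
  | succ m ih =>
    intro M hM
    have hJle : J ≤ (m + 1) * J := Nat.le_mul_of_pos_left _ (Nat.succ_pos m)
    have hmul : (m + 1) * J = m * J + J := by ring
    have hJM : J < M := by omega
    have hmJ : m * J < M - J := by omega
    rw [geom_sum_succ]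
    calc (∑ k ∈ Icc 1 J, f k * x ^ k) * (∑ i ∈ range (m+1), (∑ k ∈ Icc 1 J, f k * x ^ k) ^ i) + 1
        ≤ (∑ k ∈ Icc 1 J, f k * x ^ k) * (∑ n ∈ range (M - J), x ^ n * b n) + 1 := by
          have hih := ih (M - J) hmJ
          nlinarith [hih, hT]
      _ ≤ ∑ n ∈ range M, x ^ n * b n := by
          have hpl := pgs_lower hf hbn hb0 hren x hx0 J M hJ hJM
          linarith

lemma sum_f_le_one (hf : ∀ k, 0 ≤ f k) (hbn : ∀ n, 0 ≤ b n) (hb0 : b 0 = 1)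
    (hb1 : ∀ n, b n ≤ 1)
    (hren : ∀ n, 1 ≤ n → b n = ∑ k ∈ Icc 1 n, f k * b (n - k)) (J : ℕ) :
    ∑ k ∈ Icc 1 J, f k ≤ 1 := by
  rcases Nat.eq_zero_or_pos J with hJ | hJ
  · simp [hJ]
  by_contra hs
  push_neg at hs
  set s := ∑ k ∈ Icc 1 J, f k with hsdef
  have hs1 : 1 < s := hs
  -- choose x = 1 - ε
  set ε : ℝ := (s - 1) / (2 * J * s) with hε
  have hJpos : (0:ℝ) < J := by exact_mod_cast hJ
  have hεpos : 0 < ε := by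
    apply div_pos (by linarith)
    positivity
  have hεle : ε ≤ 1 / 2 := by
    have hJge1 : (1:ℝ) ≤ J := by exact_mod_cast hJ
    have hsp : (0:ℝ) ≤ s := by linarith
    rw [hε, div_le_div_iff₀ (by positivity) (by norm_num)]
    nlinarith [mul_nonneg (sub_nonneg.2 hJge1) hsp]
  set x : ℝ := 1 - ε with hx
  have hx0 : 0 ≤ x := by rw [hx]; linarith
  have hx1 : x < 1 := by rw [hx]; linarith
  -- T > 1
  have hxJ : 1 - J * ε ≤ x ^ J := by
    have := one_add_mul_le_pow (a := -ε) (by linarith) J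
    simpa [hx, sub_eq_add_neg, mul_comm] using this
  have hT1 : 1 < ∑ k ∈ Icc 1 J, f k * x ^ k := by
    have h5 : (∑ k ∈ Icc 1 J, f k) * x ^ J ≤ ∑ k ∈ Icc 1 J, f k * x ^ k := by
      rw [Finset.sum_mul]
      apply Finset.sum_le_sum
      intro k hk
      simp only [mem_Icc] at hk
      exact mul_le_mul_of_nonneg_left
        (pow_le_pow_of_le_one hx0 (le_of_lt hx1) hk.2) (hf k)
    have h6 : J * ε * s = (s - 1) / 2 := by
      rw [hε]; field_simp
    nlinarith [hxJ, hs1]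
  -- contradiction with boundedness
  obtain ⟨m, hm⟩ := exists_nat_gt ((1 - x)⁻¹)
  have h7 := iterate_lower hf hbn hb0 hren x hx0 J hJ m (m * J + 1) (by omega)
  have h8 := geom_bound x hx0 hx1 hbn hb1 (m * J + 1)
  have h9 : (m:ℝ) + 1 ≤ ∑ i ∈ range (m + 1), (∑ k ∈ Icc 1 J, f k * x ^ k) ^ i := by
    have : ∀ i ∈ range (m + 1), (1:ℝ) ≤ (∑ k ∈ Icc 1 J, f k * x ^ k) ^ i :=
      fun i _ => one_le_pow₀ (le_of_lt hT1)
    calc ((m:ℝ) + 1) = ∑ _i ∈ range (m+1), (1:ℝ) := by simp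
      _ ≤ _ := Finset.sum_le_sum this
  linarith

lemma range_sum_eq_Icc (hf0 : f 0 = 0) (J : ℕ) :
    ∑ k ∈ range (J + 1), f k = ∑ k ∈ Icc 1 J, f k := by
  rw [Finset.sum_range_succ', hf0, add_zero, ← Finset.Ico_add_one_right_eq_Icc,
    Finset.sum_Ico_eq_sum_range]
  simp [add_comm]

lemma f_partial_le (hf0 : f 0 = 0) (hf : ∀ k, 0 ≤ f k) (hbn : ∀ n, 0 ≤ b n) (hb0 : b 0 = 1)
    (hb1 : ∀ n, b n ≤ 1)
    (hren : ∀ n, 1 ≤ n → b n = ∑ k ∈ Icc 1 n, f k * b (n - k)) (J : ℕ) :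
    ∑ k ∈ range J, f k ≤ 1 := by
  cases J with
  | zero => simp
  | succ J => rw [range_sum_eq_Icc hf0]; exact sum_f_le_one hf hbn hb0 hb1 hren J

lemma f_summable (hf0 : f 0 = 0) (hf : ∀ k, 0 ≤ f k) (hbn : ∀ n, 0 ≤ b n) (hb0 : b 0 = 1)
    (hb1 : ∀ n, b n ≤ 1)
    (hren : ∀ n, 1 ≤ n → b n = ∑ k ∈ Icc 1 n, f k * b (n - k)) :
    Summable f ∧ ∑' k, f k ≤ 1 := by
  have h1 := f_partial_le hf0 hf hbn hb0 hb1 hren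
  have h2 : Summable f := summable_of_sum_range_le hf h1
  exact ⟨h2, Real.tsum_le_of_sum_range_le hf h1⟩

lemma defective_tendsto (hf0 : f 0 = 0) (hf : ∀ k, 0 ≤ f k) (hbn : ∀ n, 0 ≤ b n) (hb0 : b 0 = 1)
    (hb1 : ∀ n, b n ≤ 1)
    (hren : ∀ n, 1 ≤ n → b n = ∑ k ∈ Icc 1 n, f k * b (n - k))
    (hS : ∑' k, f k < 1) : Tendsto b atTop (𝓝 0) := by
  have hsum : Summable f := (f_summable hf0 hf hbn hb0 hb1 hren).1
  set S := ∑' k, f k with hSdef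
  have hS0 : 0 ≤ S := tsum_nonneg hf
  have hBnn : ∀ M, 0 ≤ ∑ n ∈ range M, b n :=
    fun M => Finset.sum_nonneg fun n _ => hbn n
  have key : ∀ M, ∑ n ∈ range M, b n ≤ (1 - S)⁻¹ := by
    intro M
    rcases Nat.eq_zero_or_pos M with hM | hM
    · simp only [hM, Finset.range_zero, Finset.sum_empty]
      exact inv_nonneg.2 (by linarith)
    have hup := pgs_upper hf hbn hb0 hren 1 zero_le_one M hM
    simp only [one_pow, one_mul, mul_one] at hup
    have hsub : ∀ k ∈ Icc 1 (M-1), f k * ∑ m ∈ range (M - k), b m ≤ f k * ∑ n ∈ range M, b n := by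
      intro k hk
      apply mul_le_mul_of_nonneg_left _ (hf k)
      apply Finset.sum_le_sum_of_subset_of_nonneg
      · exact Finset.range_subset_range.2 (by omega)
      · intro n _ _; exact hbn n
    have h3 : ∑ n ∈ range M, b n ≤ 1 + (∑ k ∈ Icc 1 (M-1), f k) * ∑ n ∈ range M, b n := by
      calc ∑ n ∈ range M, b n ≤ 1 + ∑ k ∈ Icc 1 (M-1), f k * ∑ m ∈ range (M - k), b m := hup
        _ ≤ 1 + ∑ k ∈ Icc 1 (M-1), f k * ∑ n ∈ range M, b n := by
            have := Finset.sum_le_sum hsub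
            linarith
        _ = 1 + (∑ k ∈ Icc 1 (M-1), f k) * ∑ n ∈ range M, b n := by rw [Finset.sum_mul]
    have h4 : ∑ k ∈ Icc 1 (M-1), f k ≤ S :=
      Summable.sum_le_tsum _ (fun k _ => hf k) hsum
    have h5 : (∑ k ∈ Icc 1 (M-1), f k) * ∑ n ∈ range M, b n ≤ S * ∑ n ∈ range M, b n :=
      mul_le_mul_of_nonneg_right h4 (hBnn M)
    have h6 : ∑ n ∈ range M, b n ≤ 1 + S * ∑ n ∈ range M, b n := by linarith
    have h7 : (0:ℝ) < 1 - S := by linarith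
    rw [inv_eq_one_div, le_div_iff₀ h7]
    nlinarith
  have hsb : Summable b := summable_of_sum_range_le hbn key
  exact hsb.tendsto_atTop_zero

lemma renewal_identity (hf0 : f 0 = 0) (hb0 : b 0 = 1)
    (hren : ∀ n, 1 ≤ n → b n = ∑ k ∈ Icc 1 n, f k * b (n - k)) (n : ℕ) :
    ∑ j ∈ range (n + 1), (1 - ∑ k ∈ range (j + 1), f k) * b (n - j) = 1 := by
  induction n with
  | zero => simp [hb0, hf0]
  | succ n ih =>
    rw [Finset.sum_range_succ']
    have hq : ∀ j : ℕ, (1 - ∑ k ∈ range (j + 1 + 1), f k)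
        = (1 - ∑ k ∈ range (j + 1), f k) - f (j + 1) := by
      intro j; rw [Finset.sum_range_succ]; ring
    have hsplit : ∑ j ∈ range (n + 1), (1 - ∑ k ∈ range (j + 1 + 1), f k) * b (n + 1 - (j + 1))
        = ∑ j ∈ range (n + 1), (1 - ∑ k ∈ range (j + 1), f k) * b (n - j)
          - ∑ j ∈ range (n + 1), f (j + 1) * b (n - j) := by
      rw [← Finset.sum_sub_distrib]
      apply Finset.sum_congr rfl
      intro j hj
      rw [hq j]
      have : n + 1 - (j + 1) = n - j := by omega
      rw [this]; ring
    have hconv : ∑ j ∈ range (n + 1), f (j + 1) * b (n - j) = b (n + 1) := by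
      rw [hren (n + 1) (by omega), ← Finset.Ico_add_one_right_eq_Icc, Finset.sum_Ico_eq_sum_range]
      refine Finset.sum_congr (by rw [Nat.add_sub_cancel]) fun j _ => ?_
      have h1 : 1 + j = j + 1 := by omega
      have h2 : n + 1 - (j + 1) = n - j := by omega
      rw [h1, h2]
    rw [hsplit, hconv, ih]
    simp [hf0]

lemma Ioc_zero_one : (Ioc 0 1 : Finset ℕ) = {1} := by
  rw [← Finset.Icc_add_one_left_eq_Ioc]; exact Finset.Icc_self 1

lemma step_lemma (hf0 : f 0 = 0) (hf : ∀ k, 0 ≤ f k) (hf1 : 0 < f 1) (hb0 : b 0 = 1)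
    (hb1 : ∀ n, b n ≤ 1) (hbn : ∀ n, 0 ≤ b n)
    (hren : ∀ n, 1 ≤ n → b n = ∑ k ∈ Icc 1 n, f k * b (n - k))
    (hsum : Summable f) (hS : ∑' k, f k = 1)
    (lam : ℝ) (hlam : lam = limsup b atTop) (hlam0 : 0 ≤ lam)
    {ε : ℝ} (hε : 0 < ε) :
    ∃ δ : ℝ, 0 < δ ∧ ∃ N, 1 ≤ N ∧ ∀ m, N ≤ m → lam - δ ≤ b m → lam - ε ≤ b (m - 1) := by
  have hBddle : IsBoundedUnder (· ≤ ·) atTop b := isBoundedUnder_of ⟨1, hb1⟩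
  set δ' : ℝ := f 1 * ε / 4 with hδ'
  have hδ'pos : 0 < δ' := by positivity
  have hf1le : f 1 ≤ 1 := by
    have := sum_f_le_one hf hbn hb0 hb1 hren 1
    simpa using this
  -- choose K
  have hps : Tendsto (fun J => ∑ k ∈ range J, f k) atTop (𝓝 1) := by
    have := hsum.hasSum.tendsto_sum_nat
    rwa [hS] at this
  obtain ⟨K0, hK0⟩ := (hps.eventually (eventually_ge_nhds (show 1 - δ' < 1 by linarith))).exists
  set K := K0 + 1 with hK
  have hK1 : 1 ≤ K := by omega
  have hKsum : 1 - δ' ≤ ∑ k ∈ range (K + 1), f k := by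
    refine le_trans hK0 (Finset.sum_le_sum_of_subset_of_nonneg
      (Finset.range_subset_range.2 (by omega)) fun k _ _ => hf k)
  have htail : ∀ m, K ≤ m → ∑ k ∈ Ioc K m, f k ≤ δ' := by
    intro m hm
    have h1 : (Ioc K m : Finset ℕ) = Ico (K+1) (m+1) := by
      rw [Finset.Ico_add_one_right_eq_Icc, Finset.Icc_add_one_left_eq_Ioc]
    have h2 : ∑ k ∈ Ico (K+1) (m+1), f k
        = ∑ k ∈ range (m+1), f k - ∑ k ∈ range (K+1), f k :=
      Finset.sum_Ico_eq_sub _ (by omega)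
    have h3 : ∑ k ∈ range (m+1), f k ≤ 1 := by
      have := Summable.sum_le_tsum (range (m+1)) (fun i _ => hf i) hsum
      rwa [hS] at this
    rw [h1, h2]
    linarith
  -- eventual upper bound
  have hev : ∀ᶠ n in atTop, b n < lam + δ' :=
    eventually_lt_of_limsup_lt (by rw [← hlam]; linarith) hBddle
  rw [eventually_atTop] at hev
  obtain ⟨N₀, hN₀⟩ := hev
  refine ⟨δ', hδ'pos, N₀ + K + 1, by omega, fun m hm hbm => ?_⟩
  have hm1 : 1 ≤ m := by omega
  have hKm : K ≤ m := by omega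
  -- decompose renewal sum
  have hdec : b m = f 1 * b (m - 1) + ∑ k ∈ Ioc 1 K, f k * b (m - k)
      + ∑ k ∈ Ioc K m, f k * b (m - k) := by
    rw [hren m hm1, show (Icc 1 m : Finset ℕ) = Ioc 0 m from Finset.Icc_add_one_left_eq_Ioc 0 m]
    rw [← Finset.sum_Ioc_consecutive (fun k => f k * b (m - k)) (by omega : 0 ≤ K) hKm,
      ← Finset.sum_Ioc_consecutive (fun k => f k * b (m - k)) (by omega : 0 ≤ 1) (by omega : 1 ≤ K),
      Ioc_zero_one, Finset.sum_singleton]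
  have hA : ∑ k ∈ Ioc 1 K, f k * b (m - k) ≤ (1 - f 1) * (lam + δ') := by
    have h1 : ∀ k ∈ Ioc 1 K, f k * b (m - k) ≤ f k * (lam + δ') := by
      intro k hk
      simp only [mem_Ioc] at hk
      exact mul_le_mul_of_nonneg_left (le_of_lt (hN₀ (m - k) (by omega))) (hf k)
    have h2 : ∑ k ∈ Ioc 1 K, f k ≤ 1 - f 1 := by
      have h3 : f 1 + ∑ k ∈ Ioc 1 K, f k = ∑ k ∈ Icc 1 K, f k := by
        rw [show (Icc 1 K : Finset ℕ) = Ioc 0 K from Finset.Icc_add_one_left_eq_Ioc 0 K,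
          ← Finset.sum_Ioc_consecutive (fun k => f k)
          (by omega : 0 ≤ 1) (by omega : 1 ≤ K), Ioc_zero_one, Finset.sum_singleton]
      have h4 := sum_f_le_one hf hbn hb0 hb1 hren K
      linarith
    calc ∑ k ∈ Ioc 1 K, f k * b (m - k) ≤ ∑ k ∈ Ioc 1 K, f k * (lam + δ') :=
          Finset.sum_le_sum h1
      _ = (∑ k ∈ Ioc 1 K, f k) * (lam + δ') := by rw [Finset.sum_mul]
      _ ≤ (1 - f 1) * (lam + δ') := by
          apply mul_le_mul_of_nonneg_right h2 (by linarith)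
  have hB : ∑ k ∈ Ioc K m, f k * b (m - k) ≤ δ' := by
    refine le_trans (Finset.sum_le_sum fun k _ => ?_) (htail m hKm)
    have := mul_le_mul_of_nonneg_left (hb1 (m - k)) (hf k)
    simpa using this
  have hmain : f 1 * (lam - ε) ≤ f 1 * b (m - 1) := by nlinarith
  exact le_of_mul_le_mul_left hmain hf1

lemma freq_lemma (hf0 : f 0 = 0) (hf : ∀ k, 0 ≤ f k) (hf1 : 0 < f 1) (hb0 : b 0 = 1)
    (hb1 : ∀ n, b n ≤ 1) (hbn : ∀ n, 0 ≤ b n)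
    (hren : ∀ n, 1 ≤ n → b n = ∑ k ∈ Icc 1 n, f k * b (n - k))
    (hsum : Summable f) (hS : ∑' k, f k = 1)
    (lam : ℝ) (hlam : lam = limsup b atTop) (hlam0 : 0 ≤ lam) :
    ∀ J : ℕ, ∀ ε : ℝ, 0 < ε → ∀ N' : ℕ, ∃ n, N' ≤ n ∧ ∀ j, j ≤ J → lam - ε ≤ b (n + j) := by
  intro J
  induction J with
  | zero =>
    intro ε hε N'
    have hCob : IsCoboundedUnder (· ≤ ·) atTop b :=
      (isBoundedUnder_of (r := (· ≥ ·)) ⟨0, hbn⟩).isCoboundedUnder_le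
    have hfreq : ∃ᶠ n in atTop, lam - ε < b n :=
      frequently_lt_of_lt_limsup hCob (by rw [← hlam]; linarith)
    obtain ⟨n, hn, h⟩ := frequently_atTop.1 hfreq N'
    refine ⟨n, hn, fun j hj => ?_⟩
    have : j = 0 := by omega
    subst this
    simpa using le_of_lt h
  | succ J ih =>
    intro ε hε N'
    obtain ⟨δ, hδ, N, hN1, hstep⟩ :=
      step_lemma hf0 hf hf1 hb0 hb1 hbn hren hsum hS lam hlam hlam0 hε
    have hε2 : 0 < min δ ε := lt_min hδ hε
    obtain ⟨n, hn, hrun⟩ := ih (min δ ε) hε2 (max N' N + 1)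
    refine ⟨n - 1, by omega, fun j hj => ?_⟩
    rcases Nat.eq_zero_or_pos j with rfl | hjpos
    · have hb_n : lam - δ ≤ b n := by
        have := hrun 0 (Nat.zero_le _)
        simp only [add_zero] at this
        have hmin := min_le_left δ ε
        linarith
      have := hstep n (by omega) hb_n
      simpa using this
    · have hidx : n - 1 + j = n + (j - 1) := by omega
      rw [hidx]
      have := hrun (j - 1) (by omega)
      have hmin := min_le_right δ ε
      linarith

lemma proper_tendsto (hf0 : f 0 = 0) (hf : ∀ k, 0 ≤ f k) (hf1 : 0 < f 1) (hb0 : b 0 = 1)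
    (hb1 : ∀ n, b n ≤ 1) (hbn : ∀ n, 0 ≤ b n)
    (hren : ∀ n, 1 ≤ n → b n = ∑ k ∈ Icc 1 n, f k * b (n - k))
    (hsum : Summable f) (hS : ∑' k, f k = 1) :
    ∃ β : ℝ, 0 ≤ β ∧ Tendsto b atTop (𝓝 β) := by
  have hBddle : IsBoundedUnder (· ≤ ·) atTop b := isBoundedUnder_of ⟨1, hb1⟩
  have hBddge : IsBoundedUnder (· ≥ ·) atTop b := isBoundedUnder_of ⟨0, hbn⟩
  set lam := limsup b atTop with hlam
  have hlam0 : 0 ≤ lam :=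
    le_limsup_of_frequently_le (Frequently.of_forall fun n => hbn n) hBddle
  set q : ℕ → ℝ := fun j => 1 - ∑ k ∈ range (j + 1), f k with hqdef
  have hqn : ∀ j, 0 ≤ q j := by
    intro j
    have := Summable.sum_le_tsum (range (j + 1)) (fun i _ => hf i) hsum
    rw [hS] at this
    simp only [hqdef]
    linarith
  have hq0 : q 0 = 1 := by simp [hqdef, hf0]
  have hq1 : ∀ j, q j ≤ 1 := by
    intro j
    have : 0 ≤ ∑ k ∈ range (j + 1), f k := Finset.sum_nonneg fun k _ => hf k
    simp only [hqdef]
    linarith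
  have hident := renewal_identity hf0 hb0 hren
  set M : ℕ → ℝ := fun J => ∑ j ∈ range J, q j with hMdef
  have hMnn : ∀ J, 0 ≤ M J := fun J => Finset.sum_nonneg fun j _ => hqn j
  have key1 : ∀ (J : ℕ) (ε : ℝ), 0 < ε → (lam - ε) * M J ≤ 1 := by
    intro J ε hε
    obtain ⟨n, -, hrun⟩ :=
      freq_lemma hf0 hf hf1 hb0 hb1 hbn hren hsum hS lam hlam hlam0 J ε hε 0
    have h1 : ∑ j ∈ range J, q j * b (n + J - j) ≤ 1 := by
      rw [← hident (n + J)]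
      apply Finset.sum_le_sum_of_subset_of_nonneg
      · exact Finset.range_subset_range.2 (by omega)
      · intro j _ _; exact mul_nonneg (hqn j) (hbn _)
    have h2 : ∀ j ∈ range J, (lam - ε) * q j ≤ q j * b (n + J - j) := by
      intro j hj
      simp only [mem_range] at hj
      have hidx : n + J - j = n + (J - j) := by omega
      rw [hidx, mul_comm]
      exact mul_le_mul_of_nonneg_left (hrun (J - j) (by omega)) (hqn j)
    calc (lam - ε) * M J = ∑ j ∈ range J, (lam - ε) * q j := Finset.mul_sum _ _ _
      _ ≤ ∑ j ∈ range J, q j * b (n + J - j) := Finset.sum_le_sum h2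
      _ ≤ 1 := h1
  have key2 : ∀ J, lam * M J ≤ 1 := by
    intro J
    rcases eq_or_lt_of_le (hMnn J) with h | h
    · rw [← h, mul_zero]; norm_num
    · apply le_of_forall_pos_le_add
      intro η hη
      have h1 := key1 J (η / M J) (div_pos hη h)
      have h2 : (lam - η / M J) * M J = lam * M J - η := by
        field_simp
      linarith
  by_cases hbdd : BddAbove (Set.range M)
  · -- positive/null recurrent with finite mean
    obtain ⟨c, hc⟩ := hbdd
    have hqsum : Summable q := summable_of_sum_range_le hqn
      (fun n => hc (Set.mem_range_self n))
    set μ := ∑' j, q j with hμdef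
    have hμ1 : 1 ≤ μ := by
      have := Summable.le_tsum hqsum 0 (fun j _ => hqn j)
      rwa [hq0] at this
    have hμpos : 0 < μ := lt_of_lt_of_le one_pos hμ1
    have hMt : Tendsto M atTop (𝓝 μ) := hqsum.hasSum.tendsto_sum_nat
    have hlamμ : lam * μ ≤ 1 :=
      le_of_tendsto (hMt.const_mul lam) (Eventually.of_forall key2)
    have key3 : ∀ J : ℕ, 1 ≤ J → ∀ ε : ℝ, 0 < ε →
        1 - (M J - 1) * (lam + ε) - (μ - M J) ≤ liminf b atTop := by
      intro J hJ ε hε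
      have hev : ∀ᶠ n in atTop, b n < lam + ε :=
        eventually_lt_of_limsup_lt (by rw [← hlam]; linarith) hBddle
      rw [eventually_atTop] at hev
      obtain ⟨N₀, hN₀⟩ := hev
      apply le_liminf_of_le hBddle.isCoboundedUnder_ge
      filter_upwards [eventually_ge_atTop (N₀ + J)] with n hn
      have hsplit : ∑ j ∈ range J, q j * b (n - j)
          + ∑ j ∈ Ico J (n + 1), q j * b (n - j) = 1 := by
        rw [Finset.sum_range_add_sum_Ico _ (by omega : J ≤ n + 1)]
        exact hident n
      have htail2 : ∑ j ∈ Ico J (n + 1), q j * b (n - j) ≤ μ - M J := by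
        have h1 : ∀ j ∈ Ico J (n + 1), q j * b (n - j) ≤ q j := by
          intro j _
          have := mul_le_mul_of_nonneg_left (hb1 (n - j)) (hqn j)
          simpa using this
        have h2 : ∑ j ∈ Ico J (n + 1), q j = M (n + 1) - M J :=
          Finset.sum_Ico_eq_sub _ (by omega)
        have h3 : M (n + 1) ≤ μ := by
          have := Summable.sum_le_tsum (range (n + 1)) (fun i _ => hqn i) hqsum
          exact this
        calc ∑ j ∈ Ico J (n + 1), q j * b (n - j) ≤ ∑ j ∈ Ico J (n + 1), q j :=
              Finset.sum_le_sum h1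
          _ = M (n + 1) - M J := h2
          _ ≤ μ - M J := by linarith
      have hhead : ∑ j ∈ range J, q j * b (n - j) ≤ b n + (M J - 1) * (lam + ε) := by
        have hJsplit : ∑ j ∈ range J, q j * b (n - j)
            = q 0 * b n + ∑ j ∈ Ico 1 J, q j * b (n - j) := by
          rw [range_eq_Ico, Finset.sum_eq_sum_Ico_succ_bot (by omega : 0 < J)]
          simp
        have h4 : ∑ j ∈ Ico 1 J, q j * b (n - j) ≤ ∑ j ∈ Ico 1 J, q j * (lam + ε) := by
          apply Finset.sum_le_sum
          intro j hj
          simp only [mem_Ico] at hj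
          exact mul_le_mul_of_nonneg_left (le_of_lt (hN₀ (n - j) (by omega))) (hqn j)
        have h5 : ∑ j ∈ Ico 1 J, q j * (lam + ε) = (M J - 1) * (lam + ε) := by
          rw [← Finset.sum_mul]
          congr 1
          have h6 : ∑ j ∈ Ico 1 J, q j = ∑ j ∈ range J, q j - ∑ j ∈ range 1, q j :=
            Finset.sum_Ico_eq_sub _ (by omega)
          rw [h6]
          simp [hq0]; rfl
        rw [hJsplit, hq0, one_mul]
        linarith
      linarith
    have key4 : ∀ ε : ℝ, 0 < ε → 1 - (μ - 1) * (lam + ε) ≤ liminf b atTop := by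
      intro ε hε
      have htend : Tendsto (fun J => 1 - (M J - 1) * (lam + ε) - (μ - M J)) atTop
          (𝓝 (1 - (μ - 1) * (lam + ε) - (μ - μ))) := by
        have h1 : Tendsto (fun J => M J - 1) atTop (𝓝 (μ - 1)) := hMt.sub_const 1
        have h2 : Tendsto (fun J => (M J - 1) * (lam + ε)) atTop (𝓝 ((μ - 1) * (lam + ε))) :=
          h1.mul_const _
        have h3 : Tendsto (fun J => (μ : ℝ) - M J) atTop (𝓝 (μ - μ)) :=
          tendsto_const_nhds.sub hMt
        exact (tendsto_const_nhds.sub h2).sub h3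
      rw [sub_self, sub_zero] at htend
      apply le_of_tendsto htend
      filter_upwards [eventually_ge_atTop 1] with J hJ
      exact key3 J hJ ε hε
    have key5 : 1 - (μ - 1) * lam ≤ liminf b atTop := by
      apply le_of_forall_pos_le_add
      intro η hη
      have h1 := key4 (η / μ) (div_pos hη hμpos)
      have h2 : (μ - 1) * (η / μ) ≤ η := by
        rw [mul_div_assoc']
        rw [div_le_iff₀ hμpos]
        nlinarith
      have h3 : 1 - (μ - 1) * (lam + η / μ)
          = 1 - (μ - 1) * lam - (μ - 1) * (η / μ) := by ring
      linarith
    have hfinal : lam ≤ liminf b atTop := by nlinarith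
    exact ⟨lam, hlam0, tendsto_of_le_liminf_of_limsup_le hfinal le_rfl hBddle hBddge⟩
  · -- infinite mean: limit is zero
    have hlamz : lam = 0 := by
      by_contra h
      have hlampos : 0 < lam := lt_of_le_of_ne hlam0 (Ne.symm h)
      rw [not_bddAbove_iff] at hbdd
      obtain ⟨y, ⟨J, rfl⟩, hy⟩ := hbdd (1 / lam)
      have := key2 J
      have h2 : lam * (1 / lam) < lam * M J := by
        exact mul_lt_mul_of_pos_left hy hlampos
      rw [mul_one_div_cancel (ne_of_gt hlampos)] at h2
      linarith
    refine ⟨0, le_rfl, tendsto_of_le_liminf_of_limsup_le ?_ ?_ hBddle hBddge⟩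
    · exact le_liminf_of_le hBddle.isCoboundedUnder_ge (Eventually.of_forall hbn)
    · rw [← hlam, hlamz]

theorem renewal_main (hf0 : f 0 = 0) (hf : ∀ k, 0 ≤ f k) (hf1 : 0 < f 1) (hb0 : b 0 = 1)
    (hb1 : ∀ n, b n ≤ 1) (hbn : ∀ n, 0 ≤ b n)
    (hren : ∀ n, 1 ≤ n → b n = ∑ k ∈ Icc 1 n, f k * b (n - k)) :
    ∃ β : ℝ, 0 ≤ β ∧ Tendsto b atTop (𝓝 β) := by
  obtain ⟨hsum, hle⟩ := f_summable hf0 hf hbn hb0 hb1 hren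
  rcases lt_or_eq_of_le hle with h | h
  · exact ⟨0, le_rfl, defective_tendsto hf0 hf hbn hb0 hb1 hren h⟩
  · exact proper_tendsto hf0 hf hf1 hb0 hb1 hbn hren hsum h

lemma conv_tendsto (b g : ℕ → ℝ) (β : ℝ) (hb : Tendsto b atTop (𝓝 β)) (hβ : 0 ≤ β)
    (hb1 : ∀ n, b n ≤ 1) (hbn : ∀ n, 0 ≤ b n) (hgn : ∀ n, 0 ≤ g n)
    (hw : ∀ n, g n + ∑ m ∈ range n, b (n - m) * g m ≤ b n) :
    ∃ L : ℝ, 0 ≤ L ∧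
      Tendsto (fun n => g n + ∑ m ∈ range n, b (n - m) * g m) atTop (𝓝 L) := by
  have hwnn : ∀ n, 0 ≤ g n + ∑ m ∈ range n, b (n - m) * g m := by
    intro n
    have : 0 ≤ ∑ m ∈ range n, b (n - m) * g m :=
      Finset.sum_nonneg fun m _ => mul_nonneg (hbn _) (hgn m)
    linarith [hgn n]
  rcases eq_or_lt_of_le hβ with hβ0 | hβpos
  · refine ⟨0, le_rfl, ?_⟩
    have hb0 : Tendsto b atTop (𝓝 0) := by rwa [← hβ0] at hb
    exact tendsto_of_tendsto_of_tendsto_of_le_of_le tendsto_const_nhds hb0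
      (fun n => hwnn n) (fun n => hw n)
  · -- g is summable
    have hβ1 : β ≤ 1 := le_of_tendsto hb (Eventually.of_forall hb1)
    have hgsum : Summable g := by
      apply summable_of_sum_range_le hgn (c := β⁻¹)
      intro M
      have h1 : Tendsto (fun n => ∑ m ∈ range M, b (n - m) * g m) atTop
          (𝓝 (∑ m ∈ range M, β * g m)) := by
        apply tendsto_finset_sum
        intro m _
        exact (hb.comp (tendsto_sub_atTop_nat m)).mul_const (g m)
      have h2 : ∀ᶠ n in atTop, ∑ m ∈ range M, b (n - m) * g m ≤ 1 := by
        filter_upwards [eventually_ge_atTop M] with n hn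
        have h3 : ∑ m ∈ range M, b (n - m) * g m ≤ ∑ m ∈ range n, b (n - m) * g m :=
          Finset.sum_le_sum_of_subset_of_nonneg (Finset.range_subset_range.2 hn)
            (fun m _ _ => mul_nonneg (hbn _) (hgn m))
        have h4 := hw n
        have h5 := hb1 n
        have h6 := hgn n
        linarith
      have h7 : ∑ m ∈ range M, β * g m ≤ 1 := le_of_tendsto h1 h2
      rw [← Finset.mul_sum] at h7
      rw [inv_eq_one_div, le_div_iff₀ hβpos]
      linarith [mul_comm β (∑ i ∈ range M, g i)]
    set Sg := ∑' m, g m with hSdef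
    have hSnn : 0 ≤ Sg := tsum_nonneg hgn
    have hpart : Tendsto (fun n => ∑ m ∈ range n, g m) atTop (𝓝 Sg) :=
      hgsum.hasSum.tendsto_sum_nat
    have hg0 : Tendsto g atTop (𝓝 0) := hgsum.tendsto_atTop_zero
    -- error term tends to zero
    have hE : Tendsto (fun n => ∑ m ∈ range n, (b (n - m) - β) * g m) atTop (𝓝 0) := by
      rw [Metric.tendsto_atTop]
      intro ε hε
      set C : ℝ := Sg + 1 with hC
      have hCpos : 0 < C := by linarith
      obtain ⟨N₁, hN₁⟩ := Metric.tendsto_atTop.1 hb (ε / (2 * C)) (by positivity)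
      obtain ⟨N₂, hN₂⟩ := Metric.tendsto_atTop.1 hpart (ε / 4) (by positivity)
      have htailb : ∀ n, N₂ ≤ n → ∑ m ∈ Ico N₂ n, g m ≤ ε / 4 := by
        intro n hn
        have h1 : ∑ m ∈ Ico N₂ n, g m = ∑ m ∈ range n, g m - ∑ m ∈ range N₂, g m :=
          Finset.sum_Ico_eq_sub _ hn
        have h2 : ∑ m ∈ range n, g m ≤ Sg := Summable.sum_le_tsum _ (fun i _ => hgn i) hgsum
        have h3 := hN₂ N₂ le_rfl
        rw [Real.dist_eq, abs_lt] at h3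
        linarith
      refine ⟨N₁ + N₂, fun n hn => ?_⟩
      rw [Real.dist_eq, sub_zero]
      have habs : |∑ m ∈ range n, (b (n - m) - β) * g m|
          ≤ ∑ m ∈ range n, |b (n - m) - β| * g m := by
        refine le_trans (Finset.abs_sum_le_sum_abs _ _) (le_of_eq ?_)
        apply Finset.sum_congr rfl
        intro m _
        rw [abs_mul, abs_of_nonneg (hgn m)]
      have hsplit : ∑ m ∈ range n, |b (n - m) - β| * g m
          = ∑ m ∈ range N₂, |b (n - m) - β| * g m
            + ∑ m ∈ Ico N₂ n, |b (n - m) - β| * g m := by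
        rw [Finset.sum_range_add_sum_Ico _ (by omega : N₂ ≤ n)]
      have hpiece1 : ∑ m ∈ range N₂, |b (n - m) - β| * g m ≤ ε / (2 * C) * Sg := by
        have h1 : ∀ m ∈ range N₂, |b (n - m) - β| * g m ≤ ε / (2 * C) * g m := by
          intro m hm
          simp only [mem_range] at hm
          have h2 := hN₁ (n - m) (by omega)
          rw [Real.dist_eq] at h2
          exact mul_le_mul_of_nonneg_right (le_of_lt h2) (hgn m)
        refine le_trans (Finset.sum_le_sum h1) ?_
        rw [← Finset.mul_sum]
        apply mul_le_mul_of_nonneg_left _ (by positivity)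
        exact le_trans (Summable.sum_le_tsum _ (fun i _ => hgn i) hgsum) le_rfl
      have hpiece2 : ∑ m ∈ Ico N₂ n, |b (n - m) - β| * g m ≤ ε / 4 := by
        have h1 : ∀ m ∈ Ico N₂ n, |b (n - m) - β| * g m ≤ g m := by
          intro m _
          have h2 : |b (n - m) - β| ≤ 1 := by
            rw [abs_le]
            constructor <;> [linarith [hbn (n - m), hβ1]; linarith [hb1 (n - m), hβ]]
          nlinarith [hgn m, h2, abs_nonneg (b (n - m) - β)]
        exact le_trans (Finset.sum_le_sum h1) (htailb n (by omega))
      have hCrel : ε / (2 * C) * Sg ≤ ε / 2 := by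
        rw [div_mul_eq_mul_div, div_le_div_iff₀ (by positivity) (by norm_num)]
        nlinarith
      calc |∑ m ∈ range n, (b (n - m) - β) * g m|
          ≤ ∑ m ∈ range n, |b (n - m) - β| * g m := habs
        _ = _ := hsplit
        _ ≤ ε / (2 * C) * Sg + ε / 4 := add_le_add hpiece1 hpiece2
        _ < ε := by linarith
    -- assemble
    refine ⟨β * Sg, mul_nonneg hβ hSnn, ?_⟩
    have hrw : ∀ n, g n + ∑ m ∈ range n, b (n - m) * g m
        = g n + ∑ m ∈ range n, (b (n - m) - β) * g m + β * ∑ m ∈ range n, g m := by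
      intro n
      rw [Finset.mul_sum, add_assoc, ← Finset.sum_add_distrib]
      congr 1
      apply Finset.sum_congr rfl
      intro m _
      ring
    have hfin : Tendsto (fun n => g n + ∑ m ∈ range n, (b (n - m) - β) * g m
        + β * ∑ m ∈ range n, g m) atTop (𝓝 (0 + 0 + β * Sg)) :=
      (hg0.add hE).add (hpart.const_mul β)
    rw [zero_add, zero_add] at hfin
    exact Tendsto.congr (fun n => (hrw n).symm) hfin

section MatrixPart

attribute [local instance] Matrix.linftyOpNormedRing Matrix.linftyOpNormedAlgebra

variable {N : ℕ} [NeZero N]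

lemma entry_le_norm (M : Matrix (Fin N) (Fin N) ℂ) (i j : Fin N) : ‖M i j‖ ≤ ‖M‖ := by
  rw [Matrix.linfty_opNorm_def]
  have h1 : ‖M i j‖₊ ≤ ∑ j', ‖M i j'‖₊ :=
    Finset.single_le_sum (f := fun j' => ‖M i j'‖₊) (fun _ _ => zero_le) (Finset.mem_univ j)
  have h2 : (∑ j', ‖M i j'‖₊) ≤ Finset.univ.sup fun i => ∑ j', ‖M i j'‖₊ :=
    Finset.le_sup (f := fun i => ∑ j', ‖M i j'‖₊) (Finset.mem_univ i)
  exact_mod_cast le_trans h1 h2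

lemma matpow_entry_nonneg (A : Matrix (Fin N) (Fin N) ℝ) (hA : ∀ i j, 0 ≤ A i j) :
    ∀ n i j, 0 ≤ (A ^ n) i j := by
  intro n
  induction n with
  | zero =>
    intro i j
    rcases eq_or_ne i j with rfl | h
    · rw [pow_zero, Matrix.one_apply_eq]; norm_num
    · rw [pow_zero, Matrix.one_apply_ne h]
  | succ n ih =>
    intro i j
    rw [pow_succ, Matrix.mul_apply]
    exact Finset.sum_nonneg fun l _ => mul_nonneg (ih i l) (hA l j)

lemma a_supermul (A : Matrix (Fin N) (Fin N) ℝ) (hA : ∀ i j, 0 ≤ A i j) (m n : ℕ) :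
    (A ^ m) 0 0 * (A ^ n) 0 0 ≤ (A ^ (m + n)) 0 0 := by
  rw [pow_add, Matrix.mul_apply]
  exact Finset.single_le_sum (f := fun l => (A ^ m) 0 l * (A ^ n) l 0)
    (fun l _ => mul_nonneg (matpow_entry_nonneg A hA m 0 l) (matpow_entry_nonneg A hA n l 0))
    (Finset.mem_univ 0)

lemma a_le_specRad (A : Matrix (Fin N) (Fin N) ℝ) (hA : ∀ i j, 0 ≤ A i j)
    (hρ0 : 0 ≤ specRad A) : ∀ n, (A ^ n) 0 0 ≤ specRad A ^ n := by
  haveI : CompleteSpace (Matrix (Fin N) (Fin N) ℂ) := FiniteDimensional.complete ℂ _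
  set Ac := A.map (Complex.ofReal : ℝ → ℂ) with hAc
  -- spectral radius bounded by specRad
  have hsr_le : spectralRadius ℂ Ac ≤ ENNReal.ofReal (specRad A) := by
    rw [spectralRadius]
    refine iSup₂_le fun z hz => ?_
    have hbdd : BddAbove ((fun z : ℂ => ‖z‖) '' spectrum ℂ Ac) :=
      ((spectrum.isCompact Ac).image continuous_norm).bddAbove
    have hmem : ‖z‖ ∈ (fun z : ℂ => ‖z‖) '' spectrum ℂ Ac := Set.mem_image_of_mem _ hz
    have hle : ‖z‖ ≤ specRad A := le_csSup hbdd hmem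
    rw [← ENNReal.ofReal_coe_nnreal, coe_nnnorm]
    exact ENNReal.ofReal_le_ofReal hle
  have hsr_ne_top : spectralRadius ℂ Ac ≠ ⊤ :=
    ne_top_of_le_ne_top ENNReal.ofReal_ne_top hsr_le
  set ρ' := (spectralRadius ℂ Ac).toReal with hρ'
  have hρ'nn : 0 ≤ ρ' := ENNReal.toReal_nonneg
  have hρ'le : ρ' ≤ specRad A := by
    rw [hρ']
    exact ENNReal.toReal_le_of_le_ofReal hρ0 hsr_le
  -- real Gelfand formula
  have hG : Tendsto (fun m : ℕ => ‖Ac ^ m‖ ^ ((1:ℝ) / m)) atTop (𝓝 ρ') := by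
    have h1 := spectrum.pow_nnnorm_pow_one_div_tendsto_nhds_spectralRadius Ac
    have h2 := (ENNReal.tendsto_toReal hsr_ne_top).comp h1
    refine h2.congr fun m => ?_
    simp only [Function.comp_apply]
    rw [← ENNReal.toReal_rpow]
    simp [Real.rpow_natCast]
  -- entry bound
  have hentry : ∀ m : ℕ, (A ^ m) 0 0 ≤ ‖Ac ^ m‖ := by
    intro m
    have h1 : Ac ^ m = (A ^ m).map (Complex.ofReal : ℝ → ℂ) := by
      induction m with
      | zero =>
        rw [pow_zero, pow_zero]
        exact (Matrix.map_one _ Complex.ofReal_zero Complex.ofReal_one).symm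
      | succ m ih =>
        rw [pow_succ, pow_succ, ih, hAc]
        ext i j
        simp only [Matrix.map_apply, Matrix.mul_apply]
        push_cast
        rfl
    have h3 := entry_le_norm (Ac ^ m) 0 0
    rw [h1] at h3 ⊢
    have h4 : ‖((A ^ m).map (Complex.ofReal : ℝ → ℂ)) 0 0‖ = |(A ^ m) 0 0| := by
      rw [Matrix.map_apply, Complex.norm_real, Real.norm_eq_abs]
    rw [h4] at h3
    exact le_trans (le_abs_self _) h3
  intro n
  rcases Nat.eq_zero_or_pos n with rfl | hn
  · rw [pow_zero, pow_zero, Matrix.one_apply_eq]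
  -- supermultiplicativity along powers
  have hsuper : ∀ k : ℕ, ((A ^ n) 0 0) ^ (k + 1) ≤ (A ^ (n * (k + 1))) 0 0 := by
    intro k
    induction k with
    | zero => simp [mul_one]
    | succ k ih =>
      have h1 : n * (k + 2) = n * (k + 1) + n := by ring
      rw [h1]
      calc ((A ^ n) 0 0) ^ (k + 2) = ((A ^ n) 0 0) ^ (k + 1) * (A ^ n) 0 0 := by ring
        _ ≤ (A ^ (n * (k + 1))) 0 0 * (A ^ n) 0 0 :=
            mul_le_mul_of_nonneg_right ih (matpow_entry_nonneg A hA n 0 0)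
        _ ≤ (A ^ (n * (k + 1) + n)) 0 0 := a_supermul A hA _ _
  have hann : 0 ≤ (A ^ n) 0 0 := matpow_entry_nonneg A hA n 0 0
  -- a n ≤ s_k for all k, where s_k → ρ'^n
  have hkey : ∀ k : ℕ, (A ^ n) 0 0 ≤ (‖Ac ^ (n * (k + 1))‖ ^ ((1:ℝ) / (n * (k + 1) : ℕ))) ^ n := by
    intro k
    set m := n * (k + 1) with hm
    have hmpos : 0 < m := by positivity
    set u := ‖Ac ^ m‖ with hu
    have hunn : (0:ℝ) ≤ u := norm_nonneg _
    apply le_of_pow_le_pow_left₀ (by omega : m ≠ 0)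
    · exact pow_nonneg (Real.rpow_nonneg hunn _) n
    have hL : ((A ^ n) 0 0) ^ m = (((A ^ n) 0 0) ^ (k + 1)) ^ n := by
      rw [← pow_mul, hm]; ring_nf
    have hstep : ((A ^ n) 0 0) ^ m ≤ u ^ n := by
      rw [hL]
      calc (((A ^ n) 0 0) ^ (k + 1)) ^ n ≤ ((A ^ m) 0 0) ^ n :=
            pow_le_pow_left₀ (pow_nonneg hann _) (hsuper k) n
        _ ≤ u ^ n := pow_le_pow_left₀ (matpow_entry_nonneg A hA m 0 0) (hentry m) n
    have hR : ((u ^ ((1:ℝ) / (m:ℕ))) ^ n) ^ m = u ^ n := by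
      have hm0 : (m:ℝ) ≠ 0 := by exact_mod_cast Nat.pos_iff_ne_zero.1 hmpos
      rw [← pow_mul, ← Real.rpow_natCast (u ^ ((1:ℝ) / (m:ℕ))) (n * m), ← Real.rpow_mul hunn,
        ← Real.rpow_natCast u n]
      congr 1
      push_cast
      field_simp
    rw [hR]
    exact hstep
  have htendsto : Tendsto (fun k : ℕ => (‖Ac ^ (n * (k + 1))‖ ^ ((1:ℝ) / (n * (k + 1) : ℕ))) ^ n)
      atTop (𝓝 (ρ' ^ n)) := by
    have h1 : Tendsto (fun k : ℕ => n * (k + 1)) atTop atTop := by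
      apply tendsto_atTop_mono (fun k => ?_) tendsto_id
      calc (k : ℕ) ≤ k + 1 := by omega
        _ ≤ n * (k + 1) := Nat.le_mul_of_pos_left _ hn
    exact ((hG.comp h1).pow n)
  have hfin : (A ^ n) 0 0 ≤ ρ' ^ n := ge_of_tendsto htendsto (Eventually.of_forall hkey)
  exact le_trans hfin (pow_le_pow_left₀ hρ'nn hρ'le n)

end MatrixPart


end Stmt14Aux

open Stmt14Aux

/-- A Perron–Frobenius type convergence result for a nonnegative matrix that
need not be irreducible: under conditions (i)–(iii) the normalised row
`e₁Aⁿ/ρ(A)ⁿ` converges. -/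
theorem stmt_14 (N : ℕ) [NeZero N] (A : Matrix (Fin N) (Fin N) ℝ)
    (hA : ∀ i j, 0 ≤ A i j) (hρ : 0 < specRad A)
    (h1 : 0 < A 0 0)
    (h2 : ∃ n : ℕ, ∀ i, 0 < Matrix.vecMul (Pi.single 0 1) (A ^ n) i)
    (h3 : ∀ (n : ℕ) (i : Fin N),
      Matrix.vecMul (Pi.single 0 1) (A ^ n) i ≤ Matrix.vecMul (Pi.single 0 1) (A ^ n) 0) :
    ∃ L : Fin N → ℝ, Filter.Tendsto
      (fun n : ℕ => (specRad A ^ n)⁻¹ • Matrix.vecMul (Pi.single 0 1) (A ^ n))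
      Filter.atTop (nhds L) := by
  clear h2
  set ρ := specRad A with hρdef
  have hvec : ∀ (M : Matrix (Fin N) (Fin N) ℝ) (i : Fin N),
      Matrix.vecMul (Pi.single 0 1) M i = M 0 i := by
    intro M i
    simp [Matrix.vecMul, dotProduct, Pi.single_apply, ite_mul]
  -- matrices P and Q
  set Q : Matrix (Fin N) (Fin N) ℝ := Matrix.of fun i j => if j = 0 then 0 else A i j with hQ
  set P : Matrix (Fin N) (Fin N) ℝ := Matrix.of fun i j => if j = 0 then A i 0 else 0 with hP
  have hPQ : A = P + Q := by
    ext i j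
    by_cases hj : j = 0 <;> simp [hP, hQ, hj]
  have hQnn : ∀ i j, 0 ≤ Q i j := by
    intro i j
    by_cases hj : j = 0 <;> simp [hQ, hj]
    exact hA i j
  have hQcol : ∀ l, Q l 0 = 0 := by intro l; simp [hQ]
  have hQ00 : ∀ n, 1 ≤ n → (Q ^ n) 0 0 = 0 := by
    intro n hn
    obtain ⟨m, rfl⟩ := Nat.exists_eq_add_of_le hn
    rw [add_comm, pow_succ, Matrix.mul_apply]
    apply Finset.sum_eq_zero
    intro l _
    rw [hQcol l, mul_zero]
  have hQPe : ∀ (k : ℕ) (j : Fin N),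
      (Q ^ k * P) 0 j = if j = 0 then (Q ^ k * A) 0 0 else 0 := by
    intro k j
    by_cases hj : j = 0
    · subst hj
      rw [if_pos rfl, Matrix.mul_apply, Matrix.mul_apply]
      apply Finset.sum_congr rfl
      intro l _
      simp [hP]
    · rw [if_neg hj, Matrix.mul_apply]
      apply Finset.sum_eq_zero
      intro l _
      simp [hP, hj]
  have hAPe : ∀ (k : ℕ) (j : Fin N),
      (A ^ k * P) 0 j = if j = 0 then (A ^ (k + 1)) 0 0 else 0 := by
    intro k j
    by_cases hj : j = 0
    · subst hj
      rw [if_pos rfl, Matrix.mul_apply, pow_succ, Matrix.mul_apply]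
      apply Finset.sum_congr rfl
      intro l _
      simp [hP]
    · rw [if_neg hj, Matrix.mul_apply]
      apply Finset.sum_eq_zero
      intro l _
      simp [hP, hj]
  -- first-entrance decomposition
  have ID1 : ∀ n, A ^ n = Q ^ n + ∑ k ∈ range n, Q ^ k * P * A ^ (n - 1 - k) := by
    intro n
    induction n with
    | zero => simp
    | succ n ih =>
      have hstep : A ^ (n + 1) = P * A ^ n + Q * A ^ n := by
        calc A ^ (n + 1) = A * A ^ n := pow_succ' A n
          _ = (P + Q) * A ^ n := by rw [← hPQ]
          _ = P * A ^ n + Q * A ^ n := add_mul _ _ _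
      have e1 : ∀ k ∈ range n, Q * (Q ^ k * P * A ^ (n - 1 - k))
          = Q ^ (k + 1) * P * A ^ (n - (k + 1)) := by
        intro k hk
        simp only [mem_range] at hk
        have h5 : n - 1 - k = n - (k + 1) := by omega
        rw [h5, ← mul_assoc, ← mul_assoc, ← pow_succ']
      simp only [Nat.add_sub_cancel]
      rw [hstep]
      nth_rewrite 2 [ih]
      rw [mul_add, Finset.mul_sum, Finset.sum_range_succ', pow_zero, one_mul,
        Nat.sub_zero, Finset.sum_congr rfl e1, ← pow_succ']
      abel
  -- last-exit decomposition
  have ID2 : ∀ n, A ^ n = Q ^ n + ∑ k ∈ range n, A ^ k * P * Q ^ (n - 1 - k) := by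
    intro n
    induction n with
    | zero => simp
    | succ n ih =>
      have hstep : A ^ (n + 1) = A ^ n * Q + A ^ n * P := by
        calc A ^ (n + 1) = A ^ n * A := pow_succ A n
          _ = A ^ n * (P + Q) := by rw [← hPQ]
          _ = A ^ n * P + A ^ n * Q := mul_add _ _ _
          _ = A ^ n * Q + A ^ n * P := add_comm _ _
      have e1 : ∀ k ∈ range n, A ^ k * P * Q ^ (n - 1 - k) * Q
          = A ^ k * P * Q ^ (n - k) := by
        intro k hk
        simp only [mem_range] at hk
        have h5 : n - k = (n - 1 - k) + 1 := by omega
        rw [h5, pow_succ, ← mul_assoc]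
      simp only [Nat.add_sub_cancel]
      rw [hstep]
      nth_rewrite 1 [ih]
      rw [add_mul, Finset.sum_mul, Finset.sum_range_succ, Finset.sum_congr rfl e1, ← pow_succ]
      have h6 : n - n = 0 := by omega
      rw [h6, pow_zero, mul_one]
      abel
  -- entry versions
  have hanID : ∀ n, 1 ≤ n →
      (A ^ n) 0 0 = ∑ k ∈ Icc 1 n, (Q ^ (k - 1) * A) 0 0 * (A ^ (n - k)) 0 0 := by
    intro n hn
    have h4 : (A ^ n) 0 0
        = (Q ^ n) 0 0 + ∑ k ∈ range n, (Q ^ k * P * A ^ (n - 1 - k)) 0 0 := by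
      rw [ID1 n]
      simp [Matrix.add_apply, Matrix.sum_apply]
    have h5 : ∀ k, (Q ^ k * P * A ^ (n - 1 - k)) 0 0
        = (Q ^ k * A) 0 0 * (A ^ (n - 1 - k)) 0 0 := by
      intro k
      rw [Matrix.mul_apply]
      rw [Finset.sum_eq_single (0 : Fin N)]
      · rw [hQPe, if_pos rfl]
      · intro l _ hl
        rw [hQPe, if_neg hl, zero_mul]
      · intro h; exact absurd (Finset.mem_univ _) h
    rw [h4, hQ00 n hn, zero_add]
    rw [show (Icc 1 n : Finset ℕ) = Ico 1 (n+1) from (Finset.Ico_add_one_right_eq_Icc 1 n).symm,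
      Finset.sum_Ico_eq_sum_range]
    simp only [Nat.add_sub_cancel]
    apply Finset.sum_congr rfl
    intro k hk
    simp only [mem_range] at hk
    rw [h5 k, show 1 + k - 1 = k from by omega, show n - (1 + k) = n - 1 - k from by omega]
  have hvID : ∀ n (i : Fin N), (A ^ n) 0 i
      = (Q ^ n) 0 i + ∑ m ∈ range n, (A ^ (n - m)) 0 0 * (Q ^ m) 0 i := by
    intro n i
    have h4 : (A ^ n) 0 i
        = (Q ^ n) 0 i + ∑ k ∈ range n, (A ^ k * P * Q ^ (n - 1 - k)) 0 i := by
      rw [ID2 n]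
      simp [Matrix.add_apply, Matrix.sum_apply]
    have h5 : ∀ k, (A ^ k * P * Q ^ (n - 1 - k)) 0 i
        = (A ^ (k + 1)) 0 0 * (Q ^ (n - 1 - k)) 0 i := by
      intro k
      rw [Matrix.mul_apply]
      rw [Finset.sum_eq_single (0 : Fin N)]
      · rw [hAPe, if_pos rfl]
      · intro l _ hl
        rw [hAPe, if_neg hl, zero_mul]
      · intro h; exact absurd (Finset.mem_univ _) h
    rw [h4]
    congr 1
    rw [← Finset.sum_range_reflect (fun m => (A ^ (n - m)) 0 0 * (Q ^ m) 0 i) n]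
    apply Finset.sum_congr rfl
    intro k hk
    simp only [mem_range] at hk
    rw [h5 k, show n - (n - 1 - k) = k + 1 from by omega]
  -- now the real sequences
  have hρn : ∀ n : ℕ, (0:ℝ) < ρ ^ n := fun n => pow_pos hρ n
  set a : ℕ → ℝ := fun n => (A ^ n) 0 0 with hadef
  set b : ℕ → ℝ := fun n => a n / ρ ^ n with hbdef
  set f : ℕ → ℝ := fun k => if k = 0 then 0 else (Q ^ (k - 1) * A) 0 0 / ρ ^ k with hfdef
  have hQAnn : ∀ k, 0 ≤ (Q ^ k * A) 0 0 := by
    intro k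
    rw [Matrix.mul_apply]
    exact Finset.sum_nonneg fun l _ =>
      mul_nonneg (matpow_entry_nonneg Q hQnn k 0 l) (hA l 0)
  have hf0 : f 0 = 0 := by simp [hfdef]
  have hfnn : ∀ k, 0 ≤ f k := by
    intro k
    rcases Nat.eq_zero_or_pos k with rfl | hk
    · rw [hf0]
    · simp only [hfdef, if_neg (by omega : k ≠ 0)]
      exact div_nonneg (hQAnn (k - 1)) (le_of_lt (hρn k))
  have hf1 : 0 < f 1 := by
    simp only [hfdef, if_neg (by omega : (1:ℕ) ≠ 0)]
    apply div_pos _ (hρn 1)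
    simpa [pow_zero, Matrix.one_mul] using h1
  have hb0 : b 0 = 1 := by simp [hbdef, hadef]
  have hbnn : ∀ n, 0 ≤ b n :=
    fun n => div_nonneg (matpow_entry_nonneg A hA n 0 0) (le_of_lt (hρn n))
  have hb1 : ∀ n, b n ≤ 1 := by
    intro n
    rw [hbdef]
    rw [div_le_one (hρn n)]
    exact a_le_specRad A hA (le_of_lt hρ) n
  have hren : ∀ n, 1 ≤ n → b n = ∑ k ∈ Icc 1 n, f k * b (n - k) := by
    intro n hn
    simp only [hbdef, hadef]
    rw [hanID n hn, Finset.sum_div]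
    apply Finset.sum_congr rfl
    intro k hk
    simp only [mem_Icc] at hk
    simp only [hfdef, if_neg (by omega : k ≠ 0)]
    rw [div_mul_div_comm, ← pow_add]
    congr 2
    omega
  obtain ⟨β, hβnn, hβt⟩ := renewal_main hf0 hfnn hf1 hb0 hb1 hbnn hren
  -- componentwise convergence
  have hcomp : ∀ i : Fin N, ∃ L : ℝ, 0 ≤ L ∧
      Tendsto (fun n => (ρ ^ n)⁻¹ * (A ^ n) 0 i) atTop (𝓝 L) := by
    intro i
    set g : ℕ → ℝ := fun m => (Q ^ m) 0 i / ρ ^ m with hgdef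
    have hgnn : ∀ m, 0 ≤ g m :=
      fun m => div_nonneg (matpow_entry_nonneg Q hQnn m 0 i) (le_of_lt (hρn m))
    have hwid : ∀ n, g n + ∑ m ∈ range n, b (n - m) * g m = (A ^ n) 0 i / ρ ^ n := by
      intro n
      simp only [hgdef, hbdef, hadef]
      rw [hvID n i, add_div, Finset.sum_div]
      congr 1
      apply Finset.sum_congr rfl
      intro m hm
      simp only [mem_range] at hm
      rw [div_mul_div_comm, ← pow_add]
      congr 2
      omega
    have hw : ∀ n, g n + ∑ m ∈ range n, b (n - m) * g m ≤ b n := by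
      intro n
      rw [hwid n]
      simp only [hbdef, hadef]
      have hvv := h3 n i
      rw [hvec, hvec] at hvv
      have hmul := mul_le_mul_of_nonneg_right hvv (inv_nonneg.2 (le_of_lt (hρn n)))
      simpa [div_eq_mul_inv] using hmul
    obtain ⟨L, hL0, hLt⟩ := conv_tendsto b g β hβt hβnn hb1 hbnn hgnn hw
    refine ⟨L, hL0, ?_⟩
    apply hLt.congr
    intro n
    rw [hwid n, div_eq_inv_mul]
  choose L hL0 hLt using hcomp
  refine ⟨L, ?_⟩
  rw [tendsto_pi_nhds]
  intro i
  apply (hLt i).congr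
  intro n
  rw [Pi.smul_apply, smul_eq_mul, hvec]
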